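/- Let 𝔛 be a Bourgain–Delbaen-C-ℒ_∞-space, (Γ^s)_{s=1}^∞ pairwise disjoint self-determined subsets of Γ each satisfying the interval condition (for every γ ∈ Γ there is an interval E with e*_γ ∘ I_{Γ^s} = e*_γ ∘ P_E), so that each coordinate projection I_s = I_{Γ^s} is bounded, the I_s are mutually annihilating, and the quotient condition ‖∑_{s=1}^N Q x_s‖ ≤ C max_s ‖x_s‖ holds for x_s ∈ 𝔛_s (Q the quotient by 𝔛_0 = ∩_s ker I_s). Then the sequence (I_s)_{s=1}^∞ is unconditional in L(𝔛): there is a constant D (one may take D = C · sup_s‖I_s‖) such that for scalars with |a_s| ≤ |b_s| for all s, ‖∑_{s=1}^N a_s I_s‖ ≤ D ‖∑_{s=1}^N b_s I_s‖. -/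

import Mathlib

/-- uniformly bounded mutually annihilating projections
satisfying the quotient condition form an unconditional sequence in `L(X)`,
with unconditionality constant `D = C·A`. -/
theorem stmt_19
    {X : Type*} [NormedAddCommGroup X] [NormedSpace ℂ X]
    (I : ℕ → X →L[ℂ] X) (A C : ℝ)
    (hA : ∀ s, ‖I s‖ ≤ A)
    (hproj : ∀ s, (I s).comp (I s) = I s)
    (hann : ∀ s t, s ≠ t → (I s).comp (I t) = 0)
    (hQ : ∀ (N : ℕ) (x : Fin N → X), (∀ s : Fin N, I (s : ℕ) (x s) = x s) →
      ∀ M : ℝ, 0 ≤ M → (∀ s, ‖x s‖ ≤ M) →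
        Metric.infDist (∑ s, x s) {z : X | ∀ s : ℕ, I s z = 0} ≤ C * M) :
    ∀ (N : ℕ) (a b : Fin N → ℂ), (∀ s, ‖a s‖ ≤ ‖b s‖) →
      ‖∑ s, a s • I (s : ℕ)‖ ≤ C * A * ‖∑ s, b s • I (s : ℕ)‖ := by
  intro N a b hab
  have hA0 : 0 ≤ A := le_trans (norm_nonneg _) (hA 0)
  have hS0 : (0 : X) ∈ {z : X | ∀ s : ℕ, I s z = 0} := fun s => map_zero _
  have hne : ({z : X | ∀ s : ℕ, I s z = 0} : Set X).Nonempty := ⟨0, hS0⟩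
  by_cases hzero : ∀ s : ℕ, (I s) = 0
  · have hz : ∀ (c : Fin N → ℂ), ∑ s, c s • I (s : ℕ) = 0 := by
      intro c
      apply Finset.sum_eq_zero
      intro s _
      rw [hzero (s : ℕ), smul_zero]
    rw [hz a, hz b]
    simp
  · push_neg at hzero
    obtain ⟨t, ht⟩ := hzero
    have hApos : 0 < A := lt_of_lt_of_le (norm_pos_iff.mpr ht) (hA t)
    obtain ⟨x₁, hx₁⟩ : ∃ x, I t x ≠ 0 := by
      by_contra h
      push_neg at h
      exact ht (ContinuousLinearMap.ext h)
    set u := I t x₁ with hu_def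
    have hu : I t u = u := by
      have := ContinuousLinearMap.ext_iff.mp (hproj t) x₁
      simpa using this
    -- C is nonnegative
    have hC : 0 ≤ C := by
      set xs : Fin (t + 1) → X := fun s => if (s : ℕ) = t then u else 0 with hxs
      have h1 : ∀ s : Fin (t + 1), I (s : ℕ) (xs s) = xs s := by
        intro s
        by_cases h : (s : ℕ) = t
        · rw [hxs]; simp only [if_pos h, h]; exact hu
        · simp [hxs, h]
      have hbd : ∀ s : Fin (t + 1), ‖xs s‖ ≤ ‖u‖ := by
        intro s
        by_cases h : (s : ℕ) = t <;> simp [hxs, h]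
      have hsum : ∑ s, xs s = u := by
        rw [Finset.sum_eq_single (Fin.last t)]
        · simp [hxs, Fin.val_last]
        · intro s _ hs
          have : (s : ℕ) ≠ t := by
            intro h
            exact hs (Fin.ext (by simp [Fin.val_last, h]))
          simp [hxs, this]
        · simp
      have hid := hQ (t + 1) xs h1 ‖u‖ (norm_nonneg u) hbd
      rw [hsum] at hid
      have hlow : ‖u‖ / A ≤ Metric.infDist u {z : X | ∀ s : ℕ, I s z = 0} := by
        by_contra hcon
        push_neg at hcon
        obtain ⟨z, hz, hdz⟩ := (Metric.infDist_lt_iff hne).mp hcon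
        rw [dist_eq_norm] at hdz
        have heq : u = I t (u - z) := by
          rw [map_sub, hu, hz t, sub_zero]
        have hle : ‖u‖ ≤ A * ‖u - z‖ :=
          calc ‖u‖ = ‖I t (u - z)‖ := by rw [← heq]
            _ ≤ ‖I t‖ * ‖u - z‖ := (I t).le_opNorm _
            _ ≤ A * ‖u - z‖ :=
                mul_le_mul_of_nonneg_right (hA t) (norm_nonneg _)
        rw [lt_div_iff₀ hApos] at hdz
        nlinarith
      have hupos : 0 < ‖u‖ := norm_pos_iff.mpr hx₁
      have : 0 < C * ‖u‖ := lt_of_lt_of_le (div_pos hupos hApos) (le_trans hlow hid)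
      nlinarith
    -- main argument
    set Ta := ∑ s, a s • I (s : ℕ) with hTa
    set Tb := ∑ s, b s • I (s : ℕ) with hTb
    apply ContinuousLinearMap.opNorm_le_bound
    · positivity
    intro x
    -- ratios
    set r : Fin N → ℂ := fun s => if b s = 0 then 0 else a s / b s with hr
    have hbr : ∀ s, b s * r s = a s := by
      intro s
      by_cases h : b s = 0
      · have : ‖a s‖ ≤ 0 := by simpa [h] using hab s
        have ha0 : a s = 0 := norm_le_zero_iff.mp this
        simp [hr, h, ha0]
      · simp only [hr, if_neg h]
        field_simp
    have hrle : ∀ s, ‖r s‖ ≤ 1 := by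
      intro s
      by_cases h : b s = 0
      · simp [hr, h]
      · rw [hr]
        simp only [if_neg h, norm_div]
        rw [div_le_one (norm_pos_iff.mpr h)]
        exact hab s
    set y : Fin N → X := fun s => r s • I (s : ℕ) x with hy
    have h1 : ∀ s : Fin N, I (s : ℕ) (y s) = y s := by
      intro s
      have := ContinuousLinearMap.ext_iff.mp (hproj (s : ℕ)) x
      simp only [ContinuousLinearMap.comp_apply] at this
      simp [hy, this]
    have hbd : ∀ s : Fin N, ‖y s‖ ≤ A * ‖x‖ := by
      intro s
      rw [hy]
      simp only [norm_smul]
      calc ‖r s‖ * ‖I (s : ℕ) x‖ ≤ 1 * (A * ‖x‖) := by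
            apply mul_le_mul (hrle s) _ (norm_nonneg _) zero_le_one
            exact le_trans ((I (s : ℕ)).le_opNorm x)
              (mul_le_mul_of_nonneg_right (hA _) (norm_nonneg _))
        _ = A * ‖x‖ := one_mul _
    have hid := hQ N y h1 (A * ‖x‖) (by positivity) hbd
    -- key identity: Tb applied to (∑ y - x0) equals Ta x when I s x0 = 0
    have hkey : ∀ x0 : X, (∀ s : ℕ, I s x0 = 0) → Tb (∑ s, y s - x0) = Ta x := by
      intro x0 hx0
      rw [hTb, hTa]
      simp only [ContinuousLinearMap.sum_apply, ContinuousLinearMap.smul_apply]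
      apply Finset.sum_congr rfl
      intro s _
      rw [map_sub, hx0 (s : ℕ), sub_zero, map_sum]
      have : ∀ t' ∈ Finset.univ, t' ≠ s → I (s : ℕ) (y t') = 0 := by
        intro t' _ ht'
        have hne' : (s : ℕ) ≠ (t' : ℕ) := fun h => ht' (Fin.ext h.symm)
        have := ContinuousLinearMap.ext_iff.mp (hann (s : ℕ) (t' : ℕ) hne') x
        simp only [ContinuousLinearMap.comp_apply, ContinuousLinearMap.zero_apply] at this
        simp [hy, this]
      rw [Finset.sum_eq_single_of_mem s (Finset.mem_univ s) this]
      rw [h1 s, hy]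
      simp only [smul_smul]
      rw [hbr s]
    -- conclude with eps argument
    have hfinal : ∀ ε > 0, ‖Ta x‖ ≤ C * A * ‖Tb‖ * ‖x‖ + ε := by
      intro ε hε
      have hδ : 0 < ε / (‖Tb‖ + 1) := by positivity
      have hlt : Metric.infDist (∑ s, y s) {z : X | ∀ s : ℕ, I s z = 0}
          < C * (A * ‖x‖) + ε / (‖Tb‖ + 1) := lt_of_le_of_lt hid (by linarith)
      obtain ⟨x0, hx0S, hx0d⟩ := (Metric.infDist_lt_iff hne).mp hlt
      have hyb : ‖∑ s, y s - x0‖ < C * (A * ‖x‖) + ε / (‖Tb‖ + 1) := by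
        rwa [dist_eq_norm] at hx0d
      calc ‖Ta x‖ = ‖Tb (∑ s, y s - x0)‖ := by rw [hkey x0 hx0S]
        _ ≤ ‖Tb‖ * ‖∑ s, y s - x0‖ := Tb.le_opNorm _
        _ ≤ ‖Tb‖ * (C * (A * ‖x‖) + ε / (‖Tb‖ + 1)) := by
            apply mul_le_mul_of_nonneg_left (le_of_lt hyb) (norm_nonneg _)
        _ = ‖Tb‖ * (C * (A * ‖x‖)) + ‖Tb‖ * (ε / (‖Tb‖ + 1)) := mul_add _ _ _
        _ ≤ C * A * ‖Tb‖ * ‖x‖ + ε := by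
            have h1' : ‖Tb‖ * (C * (A * ‖x‖)) = C * A * ‖Tb‖ * ‖x‖ := by ring
            have h2' : ‖Tb‖ * (ε / (‖Tb‖ + 1)) ≤ ε := by
              rw [mul_div_assoc']
              rw [div_le_iff₀ (by positivity : (0:ℝ) < ‖Tb‖ + 1)]
              nlinarith [norm_nonneg Tb]
            linarith
    exact le_of_forall_pos_le_add hfinal
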